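/- If G is block-decomposable and o is a node of G of degree 6, then in every block decomposition of G the node o belongs to exactly two blocks, and the pair of blocks containing o is one of the following: a triangle and a square (with o an outlet of the triangle identified with the center of the square), a fork and a square (with o the outlet of the fork identified with the center of the square), or two diamonds (with o an outlet of each diamond). -/

import Mathlib

/-- The six block shapes: spike, triangle, infork, outfork, diamond, square. -/
inductive BlockShape : Type
  | spike | triangle | infork | outfork | diamond | square
  deriving DecidableEq

namespace BlockShape

/-- Number of nodes of each block shape. -/
def numNodes : BlockShape → ℕ
  | spike => 2
  | triangle => 3
  | infork => 3
  | outfork => 3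
  | diamond => 4
  | square => 5

/-- The directed edges of each block shape.
For the spike the nodes are `x = 0, y = 1` with edge `x → y`.
For the triangle the nodes are `0, 1, 2` with edges `0 → 1 → 2 → 0`.
For the infork the nodes are `x = 0, y = 1, c = 2` with edges `x → c`, `y → c`.
For the outfork the nodes are `x = 0, y = 1, c = 2` with edges `c → x`, `c → y`.
For the diamond the nodes are `p = 0, q = 1, x = 2, y = 3` with boundary edges
`p → x, x → q, q → y, y → p` and mid-edge `q → p`.
For the square the nodes are the center `c = 0` and corners `v1 = 1, …, v4 = 4`, with
edges `v1 → v2 → v3 → v4 → v1`, `c → v1`, `v2 → c`, `c → v3`, `v4 → c`. -/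
def edges : (s : BlockShape) → List (Fin s.numNodes × Fin s.numNodes)
  | spike => ([(0, 1)] : List (Fin 2 × Fin 2))
  | triangle => ([(0, 1), (1, 2), (2, 0)] : List (Fin 3 × Fin 3))
  | infork => ([(0, 2), (1, 2)] : List (Fin 3 × Fin 3))
  | outfork => ([(2, 0), (2, 1)] : List (Fin 3 × Fin 3))
  | diamond => ([(0, 2), (2, 1), (1, 3), (3, 0), (1, 0)] : List (Fin 4 × Fin 4))
  | square => ([(1, 2), (2, 3), (3, 4), (4, 1), (0, 1), (2, 0), (0, 3), (4, 0)] :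
      List (Fin 5 × Fin 5))

/-- The outlets (white nodes) of each block shape. -/
def IsOutlet : (s : BlockShape) → Fin s.numNodes → Prop
  | spike, _ => True
  | triangle, _ => True
  | infork, i => (i : ℕ) = 2
  | outfork, i => (i : ℕ) = 2
  | diamond, i => (i : ℕ) = 0 ∨ (i : ℕ) = 1
  | square, i => (i : ℕ) = 0

/-- The degree of a node inside its block (number of incident edges). -/
def blockDeg (s : BlockShape) (i : Fin s.numNodes) : ℕ :=
  s.edges.countP fun e => decide (e.1 = i) || decide (e.2 = i)

end BlockShape

/-- A directed multigraph on a vertex type `V` is given by its edge multiplicity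
function `G : V → V → ℕ`.  It is a directed graph in our sense if it has no loops
and no 2-cycles. -/
def IsDiGraph {V : Type} (G : V → V → ℕ) : Prop :=
  (∀ v, G v v = 0) ∧ ∀ x y, G x y = 0 ∨ G y x = 0

/-- Degree of a node: the number of incident edges counted with multiplicity. -/
def degree {V : Type} [Fintype V] (G : V → V → ℕ) (v : V) : ℕ :=
  ∑ w, (G v w + G w v)

/-- Two nodes are adjacent if some edge joins them (in either direction). -/
def Adj {V : Type} (G : V → V → ℕ) (x y : V) : Prop := 0 < G x y + G y x

/-- `Reach G x y` : `y` lies in the connected component of `x`. -/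
def Reach {V : Type} (G : V → V → ℕ) : V → V → Prop := Relation.ReflTransGen (Adj G)

/-- The connected component of a node, as a finset. -/
noncomputable def component {V : Type} [Fintype V] (G : V → V → ℕ) (v : V) : Finset V :=
  letI := Classical.decPred fun w => Reach G v w
  Finset.univ.filter (Reach G v)

/-- Total number of block edges mapped onto the ordered pair `(x, y)` by the gluing data. -/
def blockMult {V : Type} [DecidableEq V] (n : ℕ) (shape : Fin n → BlockShape)
    (emb : (b : Fin n) → Fin (shape b).numNodes → V) (x y : V) : ℕ :=
  ∑ b : Fin n, (shape b).edges.countP fun e => decide (emb b e.1 = x ∧ emb b e.2 = y)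

/-- A block decomposition of the directed multigraph `G` : a finite collection of blocks
together with an identification of their nodes with the nodes of `G` such that
* each block is embedded injectively,
* nodes of two distinct blocks may be identified only if both are outlets,
* each outlet is identified with at most one other outlet (no vertex lies in three blocks),
* every vertex of `G` comes from some block, and
* the multiplicity of each edge of `G` is the number of block edges giving it minus the
  number of block edges giving the reversed edge (two parallel edges with the same
  direction are kept as a double edge; two parallel edges with opposite directions
  annihilate each other). -/
structure BlockDecomposition {V : Type} [Fintype V] [DecidableEq V] (G : V → V → ℕ) :
    Type where
  n : ℕ
  shape : Fin n → BlockShape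
  emb : (b : Fin n) → Fin (shape b).numNodes → V
  emb_inj : ∀ b, Function.Injective (emb b)
  glue_outlets : ∀ (b c : Fin n) (i : Fin (shape b).numNodes) (j : Fin (shape c).numNodes),
    emb b i = emb c j → b ≠ c → (shape b).IsOutlet i ∧ (shape c).IsOutlet j
  atMostTwo : ∀ (b c d : Fin n) (i : Fin (shape b).numNodes) (j : Fin (shape c).numNodes)
    (k : Fin (shape d).numNodes), emb b i = emb c j → emb b i = emb d k →
    b = c ∨ b = d ∨ c = d
  covers : ∀ v : V, ∃ b i, emb b i = v
  edge_eq : ∀ x y : V, G x y = blockMult n shape emb x y - blockMult n shape emb y x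

/-- The number of block edges of a decomposition lying over the ordered pair `(x, y)`. -/
def BlockDecomposition.mult {V : Type} [Fintype V] [DecidableEq V] {G : V → V → ℕ}
    (D : BlockDecomposition G) : V → V → ℕ :=
  blockMult D.n D.shape D.emb

/-- A graph is (block-)decomposable if it admits a block decomposition. -/
def Decomposable {V : Type} [Fintype V] [DecidableEq V] (G : V → V → ℕ) : Prop :=
  Nonempty (BlockDecomposition G)

/-- The edge `e` of block `b` is annihilated in the decomposition `D` : some edge of
another block lies over the same pair of vertices with the opposite direction. -/
def BlockDecomposition.EdgeAnnihilated {V : Type} [Fintype V] [DecidableEq V]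
    {G : V → V → ℕ} (D : BlockDecomposition G) (b : Fin D.n)
    (e : Fin (D.shape b).numNodes × Fin (D.shape b).numNodes) : Prop :=
  e ∈ (D.shape b).edges ∧
    ∃ (c : Fin D.n) (f : Fin (D.shape c).numNodes × Fin (D.shape c).numNodes),
      c ≠ b ∧ f ∈ (D.shape c).edges ∧ D.emb c f.1 = D.emb b e.2 ∧ D.emb c f.2 = D.emb b e.1
section Aux

instance (s : BlockShape) (i : Fin s.numNodes) : Decidable (s.IsOutlet i) :=
  match s, i with
  | .spike, _ => .isTrue trivial
  | .triangle, _ => .isTrue trivial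
  | .infork, i => inferInstanceAs (Decidable ((i:ℕ) = 2))
  | .outfork, i => inferInstanceAs (Decidable ((i:ℕ) = 2))
  | .diamond, i => inferInstanceAs (Decidable ((i:ℕ) = 0 ∨ (i:ℕ) = 1))
  | .square, i => inferInstanceAs (Decidable ((i:ℕ) = 0))

lemma aux_deg_le (s : BlockShape) : ∀ i, s.blockDeg i ≤ 4 := by
  cases s <;> decide

lemma aux_noloop (s : BlockShape) : ∀ e ∈ s.edges, e.1 ≠ e.2 := by
  cases s <;> decide

lemma aux_class (s : BlockShape) : ∀ (i : Fin s.numNodes), s.IsOutlet i →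
    s.blockDeg i = 1 ∨
    (s.blockDeg i = 2 ∧ (s = .triangle ∨ ((s = .infork ∨ s = .outfork) ∧ (i:ℕ) = 2))) ∨
    (s.blockDeg i = 3 ∧ s = .diamond ∧ ((i:ℕ) = 0 ∨ (i:ℕ) = 1)) ∨
    (s.blockDeg i = 4 ∧ s = .square ∧ (i:ℕ) = 0) := by
  cases s <;> decide

lemma aux_no_return (s : BlockShape) : ∀ (i : Fin s.numNodes), s.IsOutlet i → s.blockDeg i = 4 →
    ∀ e ∈ s.edges, ∀ f ∈ s.edges, e.1 = i → f.2 = i → e.2 ≠ f.1 := by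
  cases s <;> decide

lemma aux_out_not_outlet (s : BlockShape) : ∀ (i : Fin s.numNodes), s.IsOutlet i →
    s.blockDeg i = 4 → ∀ e ∈ s.edges, e.1 = i → ¬ s.IsOutlet e.2 := by
  cases s <;> decide

lemma aux_sum_countP_left {V α : Type} [Fintype V] [DecidableEq V] (l : List α)
    (f g : α → V) (o : V) :
    ∑ w : V, l.countP (fun e => decide (f e = o ∧ g e = w)) =
      l.countP (fun e => decide (f e = o)) := by
  induction l with
  | nil => simp
  | cons a l ih =>
    simp only [List.countP_cons, Finset.sum_add_distrib, ih]
    congr 1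
    by_cases h : f a = o
    · simp [h, Finset.sum_ite_eq]
    · simp [h]

lemma aux_sum_countP_right {V α : Type} [Fintype V] [DecidableEq V] (l : List α)
    (f g : α → V) (o : V) :
    ∑ w : V, l.countP (fun e => decide (f e = w ∧ g e = o)) =
      l.countP (fun e => decide (g e = o)) := by
  induction l with
  | nil => simp
  | cons a l ih =>
    simp only [List.countP_cons, Finset.sum_add_distrib, ih]
    congr 1
    by_cases h : g a = o
    · simp [h, Finset.sum_ite_eq]
    · simp [h]

lemma aux_countP_add {α : Type} (l : List α) (p q : α → Bool)
    (h : ∀ a ∈ l, ¬(p a = true ∧ q a = true)) :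
    l.countP p + l.countP q = l.countP (fun a => p a || q a) := by
  induction l with
  | nil => simp
  | cons a l ih =>
    simp only [List.countP_cons]
    have := h a (by simp)
    have hrest := ih (fun x hx => h x (by simp [hx]))
    by_cases hp : p a <;> by_cases hq : q a <;> simp [hp, hq] at this ⊢ <;> omega

end Aux
/-- a node of degree 6 of a block-decomposable graph belongs, in every
block decomposition, to exactly two blocks, which form one of the following pairs:
triangle + square (the node an outlet of the triangle and the center of the square),
fork + square (the node the outlet of the fork and the center of the square),
or diamond + diamond (the node an outlet of each diamond). -/
theorem stmt_7 {V : Type} [Fintype V] [DecidableEq V] (G : V → V → ℕ)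
    (hG : IsDiGraph G) (o : V) (ho : degree G o = 6) (D : BlockDecomposition G) :
    ∃ b b' : Fin D.n, b ≠ b' ∧
      (∀ (c : Fin D.n) (k : Fin (D.shape c).numNodes), D.emb c k = o → c = b ∨ c = b') ∧
      ((D.shape b = BlockShape.triangle ∧ D.shape b' = BlockShape.square ∧
          (∃ i, D.emb b i = o) ∧ (∃ j, D.emb b' j = o ∧ (j : ℕ) = 0)) ∨
       ((D.shape b = BlockShape.infork ∨ D.shape b = BlockShape.outfork) ∧
          D.shape b' = BlockShape.square ∧
          (∃ i, D.emb b i = o ∧ (i : ℕ) = 2) ∧ (∃ j, D.emb b' j = o ∧ (j : ℕ) = 0)) ∨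
       (D.shape b = BlockShape.diamond ∧ D.shape b' = BlockShape.diamond ∧
          (∃ i, D.emb b i = o ∧ ((i : ℕ) = 0 ∨ (i : ℕ) = 1)) ∧
          (∃ j, D.emb b' j = o ∧ ((j : ℕ) = 0 ∨ (j : ℕ) = 1)))) := by
  classical
  obtain ⟨b0, i0, hb0⟩ := D.covers o
  have hM : ∀ x y : V, blockMult D.n D.shape D.emb x y =
      ∑ c : Fin D.n, (D.shape c).edges.countP
        (fun e => decide (D.emb c e.1 = x ∧ D.emb c e.2 = y)) := fun _ _ => rfl
  -- main counting identity
  have main : 6 + 2 * (∑ w : V, min (blockMult D.n D.shape D.emb o w)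
        (blockMult D.n D.shape D.emb w o)) =
      ∑ c : Fin D.n, (D.shape c).edges.countP
        (fun e => decide (D.emb c e.1 = o) || decide (D.emb c e.2 = o)) := by
    have key1 : ∑ w : V, (blockMult D.n D.shape D.emb o w + blockMult D.n D.shape D.emb w o)
        = 6 + 2 * (∑ w : V, min (blockMult D.n D.shape D.emb o w)
            (blockMult D.n D.shape D.emb w o)) := by
      have hpt : ∀ w : V, blockMult D.n D.shape D.emb o w + blockMult D.n D.shape D.emb w o
          = (G o w + G w o) + 2 * min (blockMult D.n D.shape D.emb o w)
              (blockMult D.n D.shape D.emb w o) := by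
        intro w
        have h1 := D.edge_eq o w
        have h2 := D.edge_eq w o
        omega
      rw [Finset.sum_congr rfl fun w _ => hpt w, Finset.sum_add_distrib, ← Finset.mul_sum]
      have h6 : ∑ w : V, (G o w + G w o) = 6 := ho
      omega
    have hc : ∀ c : Fin D.n,
        (∑ w : V, ((D.shape c).edges.countP
            (fun e => decide (D.emb c e.1 = o ∧ D.emb c e.2 = w)) +
          (D.shape c).edges.countP
            (fun e => decide (D.emb c e.1 = w ∧ D.emb c e.2 = o))))
        = (D.shape c).edges.countP
            (fun e => decide (D.emb c e.1 = o) || decide (D.emb c e.2 = o)) := by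
      intro c
      rw [Finset.sum_add_distrib, aux_sum_countP_left, aux_sum_countP_right]
      refine aux_countP_add _ _ _ fun e he hpq => ?_
      exact aux_noloop _ e he (D.emb_inj c
        ((of_decide_eq_true hpq.1).trans (of_decide_eq_true hpq.2).symm))
    have key2 : ∑ w : V, (blockMult D.n D.shape D.emb o w + blockMult D.n D.shape D.emb w o)
        = ∑ c : Fin D.n, (D.shape c).edges.countP
            (fun e => decide (D.emb c e.1 = o) || decide (D.emb c e.2 = o)) := by
      simp only [blockMult, ← Finset.sum_add_distrib]
      rw [Finset.sum_comm]
      exact Finset.sum_congr rfl fun c _ => hc c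
    rw [← key2, key1]
  have hinc : ∀ (c : Fin D.n) (k : Fin (D.shape c).numNodes), D.emb c k = o →
      (D.shape c).edges.countP
        (fun e => decide (D.emb c e.1 = o) || decide (D.emb c e.2 = o))
      = (D.shape c).blockDeg k := by
    intro c k hk
    unfold BlockShape.blockDeg
    refine List.countP_congr fun e he => ?_
    have h1 : (D.emb c e.1 = o) ↔ (e.1 = k) := by rw [← hk]; exact (D.emb_inj c).eq_iff
    have h2 : (D.emb c e.2 = o) ↔ (e.2 = k) := by rw [← hk]; exact (D.emb_inj c).eq_iff
    rw [decide_eq_decide.mpr h1, decide_eq_decide.mpr h2]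
  by_cases hex : ∃ b', (∃ j, D.emb b' j = o) ∧ b' ≠ b0
  · obtain ⟨b1, ⟨j0, hb1⟩, hne⟩ := hex
    have hne' : b0 ≠ b1 := fun h => hne h.symm
    have hout := D.glue_outlets b0 b1 i0 j0 (hb0.trans hb1.symm) hne'
    have hAll : ∀ (c : Fin D.n) (k : Fin (D.shape c).numNodes),
        D.emb c k = o → c = b0 ∨ c = b1 := by
      intro c k hk
      rcases D.atMostTwo c b0 b1 k i0 j0 (hk.trans hb0.symm) (hk.trans hb1.symm) with h | h | h
      · exact Or.inl h
      · exact Or.inr h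
      · exact absurd h hne'
    have hsum2 : ∑ c : Fin D.n, (D.shape c).edges.countP
          (fun e => decide (D.emb c e.1 = o) || decide (D.emb c e.2 = o))
        = (D.shape b0).blockDeg i0 + (D.shape b1).blockDeg j0 := by
      rw [← hinc b0 i0 hb0, ← hinc b1 j0 hb1,
        ← Finset.sum_pair (f := fun c : Fin D.n => (D.shape c).edges.countP
          (fun e => decide (D.emb c e.1 = o) || decide (D.emb c e.2 = o))) hne']
      refine (Finset.sum_subset (Finset.subset_univ _) ?_).symm
      intro c _ hcm
      simp only [Finset.mem_insert, Finset.mem_singleton, not_or] at hcm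
      refine List.countP_eq_zero.mpr fun e he => ?_
      simp only [Bool.or_eq_true, decide_eq_true_eq, not_or]
      constructor
      · intro h; rcases hAll c e.1 h with h' | h' <;> [exact hcm.1 h'; exact hcm.2 h']
      · intro h; rcases hAll c e.2 h with h' | h' <;> [exact hcm.1 h'; exact hcm.2 h']
    rw [hsum2] at main
    rcases aux_class (D.shape b0) i0 hout.1 with hd0 | ⟨hd0, hsh0⟩ |
        ⟨hd0, hsh0, hio⟩ | ⟨hd0, hsh0, hio⟩ <;>
      rcases aux_class (D.shape b1) j0 hout.2 with hd1 | ⟨hd1, hsh1⟩ |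
        ⟨hd1, hsh1, hjo⟩ | ⟨hd1, hsh1, hjo⟩ <;>
      try omega
    -- (2,4) : triangle/fork + square
    · refine ⟨b0, b1, hne', hAll, ?_⟩
      rcases hsh0 with htri | ⟨hfork, hi2⟩
      · exact Or.inl ⟨htri, hsh1, ⟨i0, hb0⟩, ⟨j0, hb1, hjo⟩⟩
      · exact Or.inr (Or.inl ⟨hfork, hsh1, ⟨i0, hb0, hi2⟩, ⟨j0, hb1, hjo⟩⟩)
    -- (3,3) : diamond + diamond
    · exact ⟨b0, b1, hne', hAll,
        Or.inr (Or.inr ⟨hsh0, hsh1, ⟨i0, hb0, hio⟩, ⟨j0, hb1, hjo⟩⟩)⟩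
    -- (4,2) : square + triangle/fork, swap roles
    · refine ⟨b1, b0, hne, fun c k hk => (hAll c k hk).symm, ?_⟩
      rcases hsh1 with htri | ⟨hfork, hj2⟩
      · exact Or.inl ⟨htri, hsh0, ⟨j0, hb1⟩, ⟨i0, hb0, hio⟩⟩
      · exact Or.inr (Or.inl ⟨hfork, hsh0, ⟨j0, hb1, hj2⟩, ⟨i0, hb0, hio⟩⟩)
    -- (4,4) : two squares, impossible
    · exfalso
      have hAne : (∑ w : V, min (blockMult D.n D.shape D.emb o w)
          (blockMult D.n D.shape D.emb w o)) ≠ 0 := by omega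
      obtain ⟨w, -, hw⟩ := Finset.exists_ne_zero_of_sum_ne_zero hAne
      have hw1 : blockMult D.n D.shape D.emb o w ≠ 0 := by omega
      have hw2 : blockMult D.n D.shape D.emb w o ≠ 0 := by omega
      rw [hM] at hw1 hw2
      obtain ⟨c1, -, hc1⟩ := Finset.exists_ne_zero_of_sum_ne_zero hw1
      obtain ⟨c2, -, hc2⟩ := Finset.exists_ne_zero_of_sum_ne_zero hw2
      obtain ⟨e, he, hpe⟩ := List.countP_pos_iff.mp (Nat.pos_of_ne_zero hc1)
      obtain ⟨f, hf, hpf⟩ := List.countP_pos_iff.mp (Nat.pos_of_ne_zero hc2)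
      simp only [decide_eq_true_eq] at hpe hpf
      have hdata : ∀ (c : Fin D.n) (k : Fin (D.shape c).numNodes), D.emb c k = o →
          ∃ kk, D.emb c kk = o ∧ (D.shape c).IsOutlet kk ∧ (D.shape c).blockDeg kk = 4 := by
        intro c k hk
        rcases hAll c k hk with rfl | rfl
        · exact ⟨i0, hb0, hout.1, hd0⟩
        · exact ⟨j0, hb1, hout.2, hd1⟩
      obtain ⟨k1, hk1, hk1o, hk1d⟩ := hdata c1 e.1 hpe.1
      have he1 : e.1 = k1 := D.emb_inj c1 (hpe.1.trans hk1.symm)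
      by_cases h12 : c1 = c2
      · subst h12
        have hf2 : f.2 = k1 := D.emb_inj c1 (hpf.2.trans hk1.symm)
        have hef : e.2 = f.1 := D.emb_inj c1 (hpe.2.trans hpf.1.symm)
        exact aux_no_return _ k1 hk1o hk1d e he f hf he1 hf2 hef
      · have hglue := (D.glue_outlets c1 c2 e.2 f.1 (hpe.2.trans hpf.1.symm) h12).1
        exact aux_out_not_outlet _ k1 hk1o hk1d e he he1 hglue
  · exfalso
    have hone : ∑ c : Fin D.n, (D.shape c).edges.countP
          (fun e => decide (D.emb c e.1 = o) || decide (D.emb c e.2 = o))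
        = (D.shape b0).blockDeg i0 := by
      rw [← hinc b0 i0 hb0]
      refine Finset.sum_eq_single_of_mem b0 (Finset.mem_univ _) fun c _ hcb => ?_
      refine List.countP_eq_zero.mpr fun e he => ?_
      simp only [Bool.or_eq_true, decide_eq_true_eq, not_or]
      exact ⟨fun h => hex ⟨c, ⟨e.1, h⟩, hcb⟩, fun h => hex ⟨c, ⟨e.2, h⟩, hcb⟩⟩
    have hle := aux_deg_le (D.shape b0) i0
    rw [hone] at main
    omega
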